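/- Let K be a field of characteristic 0, n ≥ 1, and P = K[x₁,…,xₙ]. Let E = Σⱼ xⱼ∂ⱼ be the Euler field and, for a derivation D = Σ_k f^k ∂_k of P, let Div D = Σ_k ∂_k(f^k). Then every derivation D of P whose coefficients f^k = D(x_k) are all homogeneous polynomials of degree 2 decomposes uniquely as D = Σᵢ cᵢ·(xᵢE) + D₀, where cᵢ ∈ K and D₀ is a derivation with degree-2 homogeneous coefficients satisfying Div D₀ = 0. That is, the degree-1 component of the Lie algebra of polynomial vector fields (in the standard grading) is the direct sum of the span of the fields xᵢE, i = 1,…,n, and the space of divergence-free fields with quadratic coefficients. -/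

import Mathlib

open MvPolynomial

noncomputable section

variable (K : Type*) [Field K] [CharZero K] (n : ℕ)

/-- The Euler vector field `E = Σⱼ xⱼ∂ⱼ` as a derivation of `K[x₁,…,xₙ]`. -/
def Euler : Derivation K (MvPolynomial (Fin n) K) (MvPolynomial (Fin n) K) :=
  ∑ j, (X j : MvPolynomial (Fin n) K) • pderiv j

/-- The divergence `Div D = Σₖ ∂ₖ(D(xₖ))` of a polynomial vector field. -/
def Divg (D : Derivation K (MvPolynomial (Fin n) K) (MvPolynomial (Fin n) K)) :
    MvPolynomial (Fin n) K :=
  ∑ k, pderiv k (D (X k))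

set_option linter.unusedSectionVars false

lemma aux_single_of_deg_one {σ : Type*} (m : σ →₀ ℕ) (h : m.degree = 1) :
    ∃ i, m = Finsupp.single i 1 := by
  have h0 : m ≠ 0 := by
    intro H; rw [H, map_zero] at h; exact one_ne_zero h.symm
  obtain ⟨i, hi⟩ := Finsupp.support_nonempty_iff.2 h0
  have hcard : m.support.card ≤ 1 := by
    have := Finset.card_nsmul_le_sum m.support m 1
      (fun j hj => Nat.one_le_iff_ne_zero.2 (Finsupp.mem_support_iff.1 hj))
    simpa [Finsupp.degree] using this.trans_eq h
  have hsup : m.support = {i} :=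
    Finset.eq_singleton_iff_unique_mem.2 ⟨hi, fun j hj => Finset.card_le_one.1 hcard j hj i hi⟩
  refine ⟨i, Finsupp.eq_single_iff.2 ⟨hsup.le, ?_⟩⟩
  rw [Finsupp.degree_apply, hsup, Finset.sum_singleton] at h
  exact h

lemma aux_pderiv_homog {σ R : Type*} [CommRing R] (p : MvPolynomial σ R) (k : σ) (m : ℕ)
    (h : p.IsHomogeneous (m + 1)) : (pderiv k p).IsHomogeneous m := by
  classical
  rw [p.as_sum, map_sum]
  apply IsHomogeneous.sum
  intro v hv
  rw [pderiv_monomial]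
  by_cases hk : v k = 0
  · rw [hk]; simpa using isHomogeneous_zero σ R m
  · apply isHomogeneous_monomial
    have hdeg : v.degree = m + 1 := by
      have := h (MvPolynomial.mem_support_iff.1 hv)
      rwa [Pi.one_def, ← Finsupp.degree_eq_weight_one] at this
    have hv' : v = (v - Finsupp.single k 1) + Finsupp.single k 1 := by
      ext j
      by_cases hj : j = k
      · simp [hj, Nat.sub_add_cancel (Nat.one_le_iff_ne_zero.2 hk)]
      · simp [Finsupp.single_apply, Ne.symm hj, hj]
    have hsing : (Finsupp.single k 1 : σ →₀ ℕ).degree = 1 := by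
      simp [Finsupp.degree_apply, Finsupp.support_single_ne_zero k one_ne_zero]
    have : v.degree = (v - Finsupp.single k 1).degree + (Finsupp.single k 1).degree := by
      conv_lhs => rw [hv']
      simp only [Finsupp.degree_eq_weight_one]
      exact map_add _ _ _
    rw [hdeg, hsing] at this
    omega

lemma aux_rep_deg_one (p : MvPolynomial (Fin n) K) (h : p.IsHomogeneous 1) :
    p = ∑ i, C (coeff (Finsupp.single i 1) p) * X i := by
  ext m
  rw [coeff_sum]
  simp only [coeff_C_mul, coeff_X']
  by_cases hm : m.degree = 1
  · obtain ⟨i0, rfl⟩ := aux_single_of_deg_one m hm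
    rw [Finset.sum_eq_single i0]
    · simp
    · intro j _ hj
      rw [if_neg, mul_zero]
      intro hc
      exact hj (Finsupp.single_left_injective one_ne_zero hc)
    · simp
  · rw [h.coeff_eq_zero (by simpa [Finsupp.degree_eq_weight_one] using hm)]
    rw [Finset.sum_eq_zero]
    intro j _
    rw [if_neg, mul_zero]
    intro hc
    apply hm
    rw [← hc]
    simp [Finsupp.degree_apply, Finsupp.support_single_ne_zero j one_ne_zero]

lemma aux_sum_apply {ι : Type*} (s : Finset ι)
    (D : ι → Derivation K (MvPolynomial (Fin n) K) (MvPolynomial (Fin n) K))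
    (p : MvPolynomial (Fin n) K) : (∑ i ∈ s, D i) p = ∑ i ∈ s, D i p := by
  induction s using Finset.cons_induction with
  | empty => simp
  | cons i s hi ih => simp [Finset.sum_cons, Derivation.add_apply, ih]

lemma Euler_X (k : Fin n) : Euler K n (X k) = X k := by
  rw [Euler, aux_sum_apply, Finset.sum_eq_single k]
  · simp
  · intro j _ hj
    simp [Derivation.smul_apply, pderiv_X_of_ne (Ne.symm hj)]
  · simp

lemma smulEuler_X (i k : Fin n) :
    ((X i : MvPolynomial (Fin n) K) • Euler K n) (X k) = X i * X k := by
  rw [Derivation.smul_apply, Euler_X, smul_eq_mul]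

lemma aux_pderiv_XX (i k : Fin n) :
    pderiv k ((X i : MvPolynomial (Fin n) K) * X k) = (if i = k then X k else 0) + X i := by
  rw [pderiv_mul, pderiv_X_self, mul_one]
  by_cases h : i = k
  · subst h; simp
  · simp [pderiv_X_of_ne h, h]

lemma aux_sum_pderiv_XX (i : Fin n) :
    ∑ k, pderiv k ((X i : MvPolynomial (Fin n) K) * X k) = C ((n : K) + 1) * X i := by
  simp only [aux_pderiv_XX, Finset.sum_add_distrib, Finset.sum_ite_eq, Finset.mem_univ, if_pos,
    Finset.sum_const, Finset.card_univ, Fintype.card_fin]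
  show X i + n • X i = C ((n : K) + 1) * X i
  rw [map_add, add_mul, C_1, one_mul, add_comm]
  congr 1
  rw [← Nat.cast_smul_eq_nsmul K, smul_eq_C_mul]

lemma Divg_decomp (c : Fin n → K)
    (D₀ : Derivation K (MvPolynomial (Fin n) K) (MvPolynomial (Fin n) K)) :
    Divg K n ((∑ i, c i • ((X i : MvPolynomial (Fin n) K) • Euler K n)) + D₀)
      = (∑ i, c i • (C ((n : K) + 1) * X i)) + Divg K n D₀ := by
  unfold Divg
  have : ∀ k : Fin n,
      pderiv k (((∑ i, c i • ((X i : MvPolynomial (Fin n) K) • Euler K n)) + D₀) (X k))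
        = (∑ i, c i • pderiv k ((X i : MvPolynomial (Fin n) K) * X k)) + pderiv k (D₀ (X k)) := by
    intro k
    rw [Derivation.add_apply, aux_sum_apply, map_add, map_sum]
    congr 1
    refine Finset.sum_congr rfl fun i _ => ?_
    rw [Derivation.smul_apply, smulEuler_X, Derivation.map_smul]
  rw [Finset.sum_congr rfl fun k _ => this k, Finset.sum_add_distrib]
  congr 1
  rw [Finset.sum_comm]
  refine Finset.sum_congr rfl fun i _ => ?_
  rw [← Finset.smul_sum, aux_sum_pderiv_XX]

/-- every derivation `D` with quadratic homogeneous coefficients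
decomposes uniquely as `D = Σᵢ cᵢ·(xᵢE) + D₀` with `cᵢ ∈ K` and `D₀` a
divergence-free derivation with quadratic homogeneous coefficients: the degree-1
component of the polynomial vector fields is the direct sum of the span of the
`xᵢE` and the divergence-free quadratic fields. -/
theorem degree_one_decomposition (hn : 1 ≤ n)
    (D : Derivation K (MvPolynomial (Fin n) K) (MvPolynomial (Fin n) K))
    (hD : ∀ k, (D (X k)).IsHomogeneous 2) :
    ∃! cD : (Fin n → K) ×
        Derivation K (MvPolynomial (Fin n) K) (MvPolynomial (Fin n) K),
      (∀ k, (cD.2 (X k)).IsHomogeneous 2) ∧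
      Divg K n cD.2 = 0 ∧
      D = (∑ i, cD.1 i • ((X i : MvPolynomial (Fin n) K) • Euler K n)) + cD.2 := by
  classical
  have hn1 : ((n : K) + 1) ≠ 0 := Nat.cast_add_one_ne_zero n
  have hf1 : (Divg K n D).IsHomogeneous 1 := by
    apply IsHomogeneous.sum
    intro k _
    refine aux_pderiv_homog (D (X k)) k 1 ?_
    rw [one_add_one_eq_two]
    exact hD k
  set c : Fin n → K := fun i => coeff (Finsupp.single i 1) (Divg K n D) / ((n : K) + 1) with hc
  have hkey : (∑ i, c i • (C ((n : K) + 1) * X i : MvPolynomial (Fin n) K)) = Divg K n D := by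
    conv_rhs => rw [aux_rep_deg_one K n (Divg K n D) hf1]
    refine Finset.sum_congr rfl fun i _ => ?_
    rw [smul_eq_C_mul, ← mul_assoc, ← C_mul, hc, div_mul_cancel₀ _ hn1]
  set S := ∑ i, c i • ((X i : MvPolynomial (Fin n) K) • Euler K n) with hS
  have hSD : S + (D - S) = D := by abel
  have hsub : ∀ k : Fin n, (D - S) (X k) = D (X k) - ∑ i, c i • (X i * X k) := by
    intro k
    rw [Derivation.sub_apply, hS, aux_sum_apply]
    congr 1
    exact Finset.sum_congr rfl fun i _ => by rw [Derivation.smul_apply, smulEuler_X]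
  refine ⟨⟨c, D - S⟩, ⟨?_, ?_, ?_⟩, ?_⟩
  · intro k
    rw [hsub k]
    refine (hD k).sub (IsHomogeneous.sum _ _ _ fun i _ => ?_)
    rw [smul_eq_C_mul]
    exact ((isHomogeneous_X K i).mul (isHomogeneous_X K k)).C_mul _
  · have h := Divg_decomp K n c (D - S)
    rw [← hS, hSD, hkey] at h
    exact left_eq_add.1 h
  · exact hSD.symm
  · rintro ⟨c', D₀'⟩ ⟨h1', h2', h3'⟩
    have hdiv : Divg K n D = ∑ i, c' i • (C ((n : K) + 1) * X i : MvPolynomial (Fin n) K) := by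
      rw [h3', Divg_decomp, h2', add_zero]
    have hcoeff : ∀ j, coeff (Finsupp.single j 1) (Divg K n D) = c' j * ((n : K) + 1) := by
      intro j
      rw [hdiv, coeff_sum]
      simp only [coeff_smul, coeff_C_mul, coeff_X', smul_eq_mul]
      rw [Finset.sum_eq_single j]
      · simp
      · intro i _ hij
        rw [if_neg (fun hc => hij (Finsupp.single_left_injective one_ne_zero hc)),
          mul_zero, mul_zero]
      · simp
    have hc' : c' = c := by
      funext j
      rw [hc]
      rw [eq_div_iff hn1]
      exact (hcoeff j).symm
    have hD0 : D₀' = D - S := by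
      rw [h3', hc']
      rw [← hS]
      abel
    rw [Prod.ext_iff]
    exact ⟨hc', hD0⟩

end
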